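/- Define G(n) = ∑_{k=0}^n (-1)^k * C(n,k) * C(2k, k+1) * C(2n-2k, n-k). Then for all n ≥ 2, (n+1)^2 * G(n) = 16 n^2 * G(n-2). -/

import Mathlib

def G5 (n : ℕ) : ℤ :=
  ∑ k ∈ Finset.range (n + 1),
    (-1 : ℤ) ^ k * (n.choose k) * ((2 * k).choose (k + 1)) * ((2 * n - 2 * k).choose (n - k))


def P2 (x y : ℚ) : ℚ :=
  1 + 2*y - y^2 - 2*y^3 - 2*x + 2*x*y + 4*x*y^2 - 2*x*y^3 - 2*x*y^4
    - 3*x^2 - 6*x^2*y + 3*x^2*y^2 + 6*x^2*y^3 + 4*x^3 - 4*x^3*y^2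

def gq (n k : ℕ) : ℚ :=
  (-1)^k * (n.choose k) * ((2*k).choose (k+1)) * ((2*n - 2*k).choose (n-k))

def tq (n k : ℕ) : ℚ :=
  P2 n k * gq n k / (((n:ℚ)-1)^2 * (2*(n:ℚ)-1-2*(k:ℚ)))

lemma key (x y a a1 a' a2 b b1 d e c c1 c2 : ℚ)
    (hy : 1 ≤ y) (hxy : y + 2 ≤ x)
    (h1 : a1 * (y+1) = a * (x - y))
    (h2 : x * a' = a * (x - y))
    (h3 : (x-1) * a2 = a' * (x - 1 - y))
    (hb : b * (y+1) = d * y)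
    (he : (2*y+1) * d = e * (y+1))
    (hb1 : (2*y+2) * e = b1 * (y+2))
    (hc1 : (x-y) * c = 2*(2*(x-y)-1) * c1)
    (hc2 : (x-y-1) * c1 = 2*(2*(x-y)-3) * c2) :
    (x+1)^2 * (a*b*c) - 16*x^2*(a2*b*c2)
      = -(P2 x (y+1)) * (a1*b1*c1)/((x-1)^2*(2*x-3-2*y))
        - (P2 x y)*(a*b*c)/((x-1)^2*(2*x-1-2*y)) := by
  have hy0 : y ≠ 0 := by positivity
  have hy1 : y + 1 ≠ 0 := by positivity
  have hy2 : y + 2 ≠ 0 := by positivity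
  have hx0 : x ≠ 0 := by nlinarith
  have hx1 : x - 1 ≠ 0 := by nlinarith
  have hxy0 : x - y ≠ 0 := by nlinarith
  have hd1 : 2*(2*(x-y)-1) ≠ 0 := by nlinarith
  have hd3 : 2*(2*(x-y)-3) ≠ 0 := by nlinarith
  have hq1 : 2*x-3-2*y ≠ 0 := by nlinarith
  have hq2 : 2*x-1-2*y ≠ 0 := by nlinarith
  have Ea1 : a1 = a * (x - y) / (y+1) := eq_div_of_mul_eq hy1 h1
  have Ea' : a' = a * (x - y) / x := eq_div_of_mul_eq hx0 (by linarith [h2])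
  have Ea2 : a2 = a' * (x - 1 - y) / (x-1) := eq_div_of_mul_eq hx1 (by linarith [h3])
  have Ed : d = b * (y+1) / y := eq_div_of_mul_eq hy0 (by linarith [hb])
  have Ee : e = (2*y+1) * d / (y+1) := eq_div_of_mul_eq hy1 (by linarith [he])
  have Eb1 : b1 = (2*y+2) * e / (y+2) := eq_div_of_mul_eq hy2 (by linarith [hb1])
  have Ec1 : c1 = (x-y) * c / (2*(2*(x-y)-1)) := eq_div_of_mul_eq hd1 (by linarith [hc1])
  have Ec2 : c2 = (x-y-1) * c1 / (2*(2*(x-y)-3)) := eq_div_of_mul_eq hd3 (by linarith [hc2])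
  rw [Ea2, Ea', Ea1, Eb1, Ee, Ed, Ec2, Ec1]
  have hd1' : (x-y)*2-1 ≠ 0 := by nlinarith
  have hd3' : (x-y)*2-3 ≠ 0 := by nlinarith
  have hq1' : x*2-3-y*2 ≠ 0 := by nlinarith
  have hq2' : x*2-1-y*2 ≠ 0 := by nlinarith
  unfold P2
  field_simp
  ring

lemma step_gen (m k : ℕ) (hk1 : 1 ≤ k) (hk2 : k ≤ m) :
    ((m:ℚ)+3)^2 * gq (m+2) k - 16*((m:ℚ)+2)^2 * gq m k
      = tq (m+2) (k+1) - tq (m+2) k := by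
  obtain ⟨p, hp⟩ : ∃ p, m = k + p := ⟨m - k, by omega⟩
  subst hp
  set n : ℕ := k + p + 2 with hn
  have e1 : 2*(k+p+2) - 2*k = 2*(p+2) := by omega
  have e2 : (k+p+2) - k = p + 2 := by omega
  have e3 : 2*(k+p+2) - 2*(k+1) = 2*(p+1) := by omega
  have e4 : (k+p+2) - (k+1) = p + 1 := by omega
  have e5 : 2*(k+p) - 2*k = 2*p := by omega
  have e6 : (k+p) - k = p := by omega
  simp only [gq, tq, hn, e1, e2, e3, e4, e5, e6]
  -- name the binomials
  set x : ℚ := ((k:ℚ) + (p:ℚ) + 2) with hx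
  have hcast : ((k+p+2 : ℕ) : ℚ) = x := by push_cast [hx]; ring
  set a : ℚ := ((k+p+2).choose k : ℚ) with ha
  set a1 : ℚ := ((k+p+2).choose (k+1) : ℚ) with ha1
  set a' : ℚ := ((k+p+1).choose k : ℚ) with ha'
  set a2 : ℚ := ((k+p).choose k : ℚ) with ha2
  set b : ℚ := ((2*k).choose (k+1) : ℚ) with hb0
  set b1 : ℚ := ((2*(k+1)).choose (k+1+1) : ℚ) with hb10
  set d : ℚ := ((2*k).choose k : ℚ) with hd0
  set e : ℚ := ((2*k+1).choose (k+1) : ℚ) with he0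
  set c : ℚ := ((2*(p+2)).choose (p+2) : ℚ) with hc0
  set c1 : ℚ := ((2*(p+1)).choose (p+1) : ℚ) with hc10
  set c2 : ℚ := ((2*p).choose p : ℚ) with hc20
  have hxk : x - (k:ℚ) = (p:ℚ) + 2 := by rw [hx]; ring
  have hxk1 : x - 1 - (k:ℚ) = (p:ℚ) + 1 := by rw [hx]; ring
  have h1 : a1 * ((k:ℚ)+1) = a * (x - (k:ℚ)) := by
    rw [hxk, ha1, ha]
    exact_mod_cast congrArg (Nat.cast : ℕ → ℚ)
      (by rw [← e2]; exact Nat.choose_succ_right_eq (k+p+2) k)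
  have h2 : x * a' = a * (x - (k:ℚ)) := by
    rw [hxk, hx, ha', ha]
    have := Nat.add_one_mul_choose_eq (k+p+1) k
    have h2' : (k+p+2) * ((k+p+1).choose k) = (k+p+2).choose (k+1) * (k+1) := by
      simpa [Nat.succ_eq_add_one] using this
    have hcq : ((k+p+2 : ℕ):ℚ) * ((k+p+1).choose k : ℚ)
        = ((k+p+2).choose (k+1) : ℚ) * ((k:ℚ)+1) := by exact_mod_cast h2'
    push_cast at hcq ⊢
    have h1' : ((k+p+2).choose (k+1) : ℚ) * ((k:ℚ)+1)
        = ((k+p+2).choose k : ℚ) * ((p:ℚ)+2) := by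
      exact_mod_cast congrArg (Nat.cast : ℕ → ℚ)
        (by rw [← e2]; exact Nat.choose_succ_right_eq (k+p+2) k)
    linarith [hcq, h1']
  have h3 : (x-1) * a2 = a' * (x - 1 - (k:ℚ)) := by
    rw [hxk1, hx, ha2, ha']
    have h3a : (k+p+1) * ((k+p).choose k) = (k+p+1).choose (k+1) * (k+1) := by
      simpa [Nat.succ_eq_add_one] using Nat.add_one_mul_choose_eq (k+p) k
    have h3b : (k+p+1).choose (k+1) * (k+1) = (k+p+1).choose k * (p+1) := by
      have := Nat.choose_succ_right_eq (k+p+1) k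
      rwa [show (k+p+1) - k = p+1 from by omega] at this
    have : (k+p+1) * ((k+p).choose k) = (k+p+1).choose k * (p+1) := h3a.trans h3b
    have hq : ((k+p+1 : ℕ):ℚ) * ((k+p).choose k : ℚ)
        = ((k+p+1).choose k : ℚ) * ((p:ℚ)+1) := by exact_mod_cast this
    push_cast at hq ⊢
    linarith [hq]
  have hb : b * ((k:ℚ)+1) = d * (k:ℚ) := by
    rw [hb0, hd0]
    have := Nat.choose_succ_right_eq (2*k) k
    rw [show 2*k - k = k from by omega] at this
    exact_mod_cast congrArg (Nat.cast : ℕ → ℚ) this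
  have he : (2*(k:ℚ)+1) * d = e * ((k:ℚ)+1) := by
    rw [hd0, he0]
    have : (2*k+1) * ((2*k).choose k) = (2*k+1).choose (k+1) * (k+1) := by
      simpa [Nat.succ_eq_add_one] using Nat.add_one_mul_choose_eq (2*k) k
    exact_mod_cast congrArg (Nat.cast : ℕ → ℚ) this
  have hb1 : (2*(k:ℚ)+2) * e = b1 * ((k:ℚ)+2) := by
    rw [he0, hb10]
    have : (2*k+2) * ((2*k+1).choose (k+1)) = (2*k+2).choose (k+2) * (k+2) := by
      simpa [Nat.succ_eq_add_one] using Nat.add_one_mul_choose_eq (2*k+1) (k+1)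
    rw [show 2*(k+1) = 2*k+2 from by ring, show k+1+1 = k+2 from by ring]
    exact_mod_cast congrArg (Nat.cast : ℕ → ℚ) this
  have hc1 : (x - (k:ℚ)) * c = 2*(2*(x - (k:ℚ))-1) * c1 := by
    rw [hxk, hc0, hc10]
    have := Nat.succ_mul_centralBinom_succ (p+1)
    simp only [Nat.centralBinom] at this
    have hq := congrArg (Nat.cast : ℕ → ℚ) this
    push_cast at hq ⊢
    linear_combination hq
  have hc2 : (x - (k:ℚ) - 1) * c1 = 2*(2*(x - (k:ℚ))-3) * c2 := by
    rw [hxk, hc10, hc20]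
    have := Nat.succ_mul_centralBinom_succ p
    simp only [Nat.centralBinom] at this
    have hq := congrArg (Nat.cast : ℕ → ℚ) this
    push_cast at hq ⊢
    linear_combination hq
  have hy : (1:ℚ) ≤ (k:ℚ) := by exact_mod_cast hk1
  have hxy : (k:ℚ) + 2 ≤ x := by rw [hx]; push_cast; linarith [Nat.cast_nonneg (α := ℚ) p]
  have K := key x (k:ℚ) a a1 a' a2 b b1 d e c c1 c2 hy hxy h1 h2 h3 hb he hb1 hc1 hc2
  simp only [P2] at K ⊢
  rw [hx] at K
  push_cast
  linear_combination ((-1:ℚ)^k) * K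

lemma key2 (v b b1 d e : ℚ) (hv : 0 ≤ v)
    (hb : b * (v+2) = d * (v+1))
    (he : (2*(v+1)+1) * d = e * (v+2))
    (hb1 : (2*(v+1)+2) * e = b1 * (v+3)) :
    (v+3)^2 * ((v+2)*b*2)
      = -(P2 (v+2) (v+2)) * b1 / ((v+2-1)^2*(2*(v+2)-1-2*(v+2)))
        - P2 (v+2) (v+1) * ((v+2)*b*2) / ((v+2-1)^2*(2*(v+2)-1-2*(v+1))) := by
  have hy0 : v + 1 ≠ 0 := by positivity
  have hy1 : v + 2 ≠ 0 := by positivity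
  have hy2 : v + 3 ≠ 0 := by positivity
  have Ed : d = b * (v+2) / (v+1) := eq_div_of_mul_eq hy0 (by linarith [hb])
  have Ee : e = (2*(v+1)+1) * d / (v+2) := eq_div_of_mul_eq hy1 (by linarith [he])
  have Eb1 : b1 = (2*(v+1)+2) * e / (v+3) := eq_div_of_mul_eq hy2 (by linarith [hb1])
  rw [Eb1, Ee, Ed,
    show (v+2-1)^2*(2*(v+2)-1-2*(v+2)) = -((v+1)^2) from by ring,
    show (v+2-1)^2*(2*(v+2)-1-2*(v+1)) = (v+1)^2 from by ring]
  unfold P2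
  field_simp
  ring

lemma step_top1 (m : ℕ) :
    ((m:ℚ)+3)^2 * gq (m+2) (m+1) - 16*((m:ℚ)+2)^2 * gq m (m+1)
      = tq (m+2) (m+2) - tq (m+2) (m+1) := by
  have hz : gq m (m+1) = 0 := by
    simp [gq, Nat.choose_succ_self]
  rw [hz]
  have e1 : 2*(m+2) - 2*(m+1) = 2 := by omega
  have e2 : (m+2) - (m+1) = 1 := by omega
  have e3 : 2*(m+2) - 2*(m+2) = 0 := by omega
  have e4 : (m+2) - (m+2) = 0 := by omega
  simp only [gq, tq, e1, e2, e3, e4]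
  set k : ℕ := m + 1 with hk
  set b : ℚ := ((2*k).choose (k+1) : ℚ) with hb0
  set b1 : ℚ := ((2*(k+1)).choose (k+1+1) : ℚ) with hb10
  set d : ℚ := ((2*k).choose k : ℚ) with hd0
  set e : ℚ := ((2*k+1).choose (k+1) : ℚ) with he0
  have hb : b * ((k:ℚ)+1) = d * (k:ℚ) := by
    rw [hb0, hd0]
    have := Nat.choose_succ_right_eq (2*k) k
    rw [show 2*k - k = k from by omega] at this
    exact_mod_cast congrArg (Nat.cast : ℕ → ℚ) this
  have he : (2*(k:ℚ)+1) * d = e * ((k:ℚ)+1) := by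
    rw [hd0, he0]
    have : (2*k+1) * ((2*k).choose k) = (2*k+1).choose (k+1) * (k+1) := by
      simpa [Nat.succ_eq_add_one] using Nat.add_one_mul_choose_eq (2*k) k
    exact_mod_cast congrArg (Nat.cast : ℕ → ℚ) this
  have hb1 : (2*(k:ℚ)+2) * e = b1 * ((k:ℚ)+2) := by
    rw [he0, hb10]
    have : (2*k+2) * ((2*k+1).choose (k+1)) = (2*k+2).choose (k+2) * (k+2) := by
      simpa [Nat.succ_eq_add_one] using Nat.add_one_mul_choose_eq (2*k+1) (k+1)
    rw [show 2*(k+1) = 2*k+2 from by ring, show k+1+1 = k+2 from by ring]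
    exact_mod_cast congrArg (Nat.cast : ℕ → ℚ) this
  have hkq : (k:ℚ) = (m:ℚ) + 1 := by rw [hk]; push_cast; ring
  rw [hkq] at hb he hb1
  have K := key2 (m:ℚ) b b1 d e (Nat.cast_nonneg m)
    (by linear_combination hb) (by linear_combination he) (by linear_combination hb1)
  have hch1 : ((m+2).choose (m+1) : ℚ) = (m:ℚ)+2 := by
    rw [Nat.choose_succ_self_right]; push_cast; ring
  have hch2 : ((m+2).choose (m+2) : ℚ) = 1 := by rw [Nat.choose_self]; norm_num
  rw [hch1, hch2, show Nat.choose 2 1 = 2 from rfl, show Nat.choose 0 0 = 1 from rfl]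
  simp only [P2] at K ⊢
  push_cast [hk]
  linear_combination ((-1:ℚ)^(m+1)) * K

lemma step_top2 (m : ℕ) :
    ((m:ℚ)+3)^2 * gq (m+2) (m+2) - 16*((m:ℚ)+2)^2 * gq m (m+2)
      = tq (m+2) (m+3) - tq (m+2) (m+2) := by
  have hz : gq m (m+2) = 0 := by
    simp [gq, Nat.choose_eq_zero_of_lt (by omega : m < m+2)]
  have hz2 : tq (m+2) (m+3) = 0 := by
    simp [tq, gq, Nat.choose_eq_zero_of_lt (by omega : m+2 < m+3)]
  rw [hz, hz2]
  have e3 : 2*(m+2) - 2*(m+2) = 0 := by omega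
  have e4 : (m+2) - (m+2) = 0 := by omega
  simp only [gq, tq, e3, e4]
  rw [Nat.choose_self]
  set B : ℚ := ((2*(m+2)).choose (m+2+1) : ℚ) with hB
  have hP : P2 ((m:ℚ)+2) ((m:ℚ)+2) = ((m:ℚ)+3)^2*((m:ℚ)+1)^2 := by
    unfold P2; ring
  have hm0 : ((m:ℚ)+1) ≠ 0 := by positivity
  push_cast
  rw [hP, show Nat.choose 0 0 = 1 from rfl]
  have hD : ((m:ℚ)+2-1)^2*(2*((m:ℚ)+2)-1-2*((m:ℚ)+2)) = -(((m:ℚ)+1)^2) := by ring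
  push_cast
  rw [hD]
  have hm1 : ((m:ℚ)+1)^2 ≠ 0 := by positivity
  field_simp
  ring

lemma step_zero (m : ℕ) :
    ((m:ℚ)+3)^2 * gq (m+2) 0 - 16*((m:ℚ)+2)^2 * gq m 0
      = tq (m+2) 1 - tq (m+2) 0 := by
  have h1 : gq (m+2) 0 = 0 := by simp [gq]
  have h2 : gq m 0 = 0 := by simp [gq]
  have h3 : tq (m+2) 0 = 0 := by simp [tq, gq]
  have h4 : tq (m+2) 1 = 0 := by
    have hP : P2 ((m:ℚ)+2) 1 = 0 := by unfold P2; ring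
    simp only [tq]
    push_cast
    rw [hP, zero_mul, zero_div]
  rw [h1, h2, h3, h4]; ring

lemma step_all (m k : ℕ) (hk : k < m + 3) :
    ((m:ℚ)+3)^2 * gq (m+2) k - 16*((m:ℚ)+2)^2 * gq m k
      = tq (m+2) (k+1) - tq (m+2) k := by
  rcases (by omega : k = 0 ∨ (1 ≤ k ∧ k ≤ m) ∨ k = m+1 ∨ k = m+2) with h | ⟨h1, h2⟩ | h | h
  · subst h; exact step_zero m
  · exact step_gen m k h1 h2
  · subst h; exact step_top1 m
  · subst h; exact step_top2 m


theorem stmt_5 (n : ℕ) (hn : 2 ≤ n) :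
    ((n : ℤ) + 1) ^ 2 * G5 n = 16 * (n : ℤ) ^ 2 * G5 (n - 2) := by
  obtain ⟨m, rfl⟩ : ∃ m, n = m + 2 := ⟨n - 2, by omega⟩
  have hsum : ∑ k ∈ Finset.range (m+3),
      (((m:ℚ)+3)^2 * gq (m+2) k - 16*((m:ℚ)+2)^2 * gq m k) = 0 := by
    have : ∀ k ∈ Finset.range (m+3),
        ((m:ℚ)+3)^2 * gq (m+2) k - 16*((m:ℚ)+2)^2 * gq m k
          = tq (m+2) (k+1) - tq (m+2) k := fun k hk =>
      step_all m k (Finset.mem_range.mp hk)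
    rw [Finset.sum_congr rfl this, Finset.sum_range_sub]
    have h0 : tq (m+2) 0 = 0 := by simp [tq, gq]
    have h1 : tq (m+2) (m+3) = 0 := by
      simp [tq, gq, Nat.choose_eq_zero_of_lt (by omega : m+2 < m+3)]
    rw [h0, h1, sub_zero]
  rw [Finset.sum_sub_distrib, ← Finset.mul_sum, ← Finset.mul_sum, sub_eq_zero] at hsum
  have hg2 : ∑ k ∈ Finset.range (m+3), gq m k = ∑ k ∈ Finset.range (m+1), gq m k := by
    rw [Finset.sum_range_succ, Finset.sum_range_succ,
      show gq m (m+1) = 0 from by simp [gq, Nat.choose_succ_self],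
      show gq m (m+2) = 0 from by simp [gq, Nat.choose_eq_zero_of_lt (by omega : m < m+2)]]
    ring
  rw [hg2] at hsum
  have hGn : ((G5 (m+2) : ℤ) : ℚ) = ∑ k ∈ Finset.range (m+3), gq (m+2) k := by
    rw [G5]
    push_cast [gq]
    rfl
  have hGm : ((G5 (m+2-2) : ℤ) : ℚ) = ∑ k ∈ Finset.range (m+1), gq m k := by
    rw [show m+2-2 = m from by omega, G5]
    push_cast [gq]
    rfl
  have final : (((m+2 : ℕ) : ℚ) + 1)^2 * ((G5 (m+2) : ℤ) : ℚ)
      = 16 * ((m+2 : ℕ) : ℚ)^2 * ((G5 (m+2-2) : ℤ) : ℚ) := by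
    rw [hGn, hGm]
    push_cast
    rw [show ((m:ℚ)+2+1) = (m:ℚ)+3 from by ring]
    linear_combination hsum
  exact_mod_cast final
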